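/- Let G be a finite simple bipartite graph that is 4k-intercyclic (contains no two vertex-disjoint cycles each of length divisible by 4), let R be a cycle of G of length divisible by 4, and let i be an even integer with i ≥ |V(R)|. Then the map U ↦ U∖R (deleting the vertices of R and all incident edges) is a bijection from the set of Sachs subgraphs of G on i vertices that contain R as a union of components onto the set of Sachs subgraphs of G∖R on i − |V(R)| vertices; moreover, for every such U, the number of cycle components of U∖R equals the number of components of U that are cycles of length congruent to 2 mod 4. -/

import Mathlib

open Polynomial SimpleGraph
open scoped Classical

noncomputable section

/-- The adjacency matrix of a simple graph `G`, with entries in `R`. -/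
def adjMat (R : Type*) [Zero R] [One R] {V : Type*} [Fintype V] (G : SimpleGraph V) :
    Matrix V V R := fun u v => if G.Adj u v then 1 else 0

/-- The characteristic polynomial `det (xI - A(G))` of a simple graph `G`. -/
def charPolyG (R : Type*) [CommRing R] {V : Type*} [Fintype V] (G : SimpleGraph V) : R[X] :=
  (adjMat R G).charpoly

/-- The permanental polynomial `per (xI - A(G))` of a simple graph `G`. -/
def permPolyG (R : Type*) [CommRing R] {V : Type*} [Fintype V] (G : SimpleGraph V) : R[X] :=
  (Matrix.charmatrix (adjMat R G)).permanent

/-- The modified characteristic polynomial `φ_p(G,x) = ∑_{i even} (-1)^{i/2} a_i x^{n-i}`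
of a (bipartite) graph `G` on `n` vertices, where `a_i` is the coefficient of `x^{n-i}`
in the characteristic polynomial. -/
def phiP {V : Type*} [Fintype V] (G : SimpleGraph V) : ℝ[X] :=
  ∑ i ∈ Finset.range (Fintype.card V + 1),
    if Even i then
      C ((-1 : ℝ) ^ (i / 2) * (charPolyG ℝ G).coeff (Fintype.card V - i)) *
        X ^ (Fintype.card V - i)
    else 0

/-- `G` contains no cycle whose length is divisible by 4. -/
def C4kFree {V : Type*} (G : SimpleGraph V) : Prop :=
  ¬ ∃ (v : V) (c : G.Walk v v), c.IsCycle ∧ 4 ∣ c.length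

/-- `G` is `4k`-intercyclic: it contains no two vertex-disjoint cycles,
each of length divisible by 4. -/
def Intercyclic4k {V : Type*} (G : SimpleGraph V) : Prop :=
  ¬ ∃ (u v : V) (c : G.Walk u u) (d : G.Walk v v),
      c.IsCycle ∧ d.IsCycle ∧ 4 ∣ c.length ∧ 4 ∣ d.length ∧
      ∀ x, x ∈ c.support → x ∉ d.support

/-- A subgraph `R` of `G` is a cycle of `G` if it is the subgraph traced by some cycle walk. -/
def IsCycleSubgraph {V : Type*} (G : SimpleGraph V) (R : G.Subgraph) : Prop :=
  ∃ (v : V) (c : G.Walk v v), c.IsCycle ∧ R = c.toSubgraph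

/-- The set of all `4k`-cycles (cycles of length divisible by 4) of `G`,
viewed as subgraphs. -/
def cycles4k {V : Type*} (G : SimpleGraph V) : Set G.Subgraph :=
  {R | ∃ (v : V) (c : G.Walk v v), c.IsCycle ∧ 4 ∣ c.length ∧ R = c.toSubgraph}

/-- The connected component `c` of the subgraph `H` is a single edge (a `K₂`). -/
def IsEdgeComp {V : Type*} {G : SimpleGraph V} (H : G.Subgraph)
    (c : H.coe.ConnectedComponent) : Prop :=
  ∃ x y : H.verts, H.coe.Adj x y ∧ c.supp = {x, y}

/-- The connected component `c` of the subgraph `H` is a cycle: there is a cycle walk whose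
support is exactly `c` and which uses every edge of `H` inside `c`. -/
def IsCycleComp {V : Type*} {G : SimpleGraph V} (H : G.Subgraph)
    (c : H.coe.ConnectedComponent) : Prop :=
  ∃ (v : H.verts) (w : H.coe.Walk v v), w.IsCycle ∧
    {x | x ∈ w.support} = c.supp ∧
    ∀ x y : H.verts, H.coe.Adj x y → x ∈ c.supp → w.toSubgraph.Adj x y

/-- A Sachs subgraph of `G`: a subgraph each of whose connected components is either
a single edge or a cycle. -/
def IsSachs {V : Type*} {G : SimpleGraph V} (H : G.Subgraph) : Prop :=
  ∀ c : H.coe.ConnectedComponent, IsEdgeComp H c ∨ IsCycleComp H c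

/-- The number of connected components of the subgraph `H`. -/
def pCount {V : Type*} {G : SimpleGraph V} (H : G.Subgraph) : ℕ :=
  Nat.card H.coe.ConnectedComponent

/-- The number of components of `H` that are cycles of length divisible by 4. -/
def sCount {V : Type*} {G : SimpleGraph V} (H : G.Subgraph) : ℕ :=
  Set.ncard {c : H.coe.ConnectedComponent | IsCycleComp H c ∧ c.supp.ncard % 4 = 0}

/-- The number of components of `H` that are cycles of length congruent to 2 mod 4. -/
def tCount {V : Type*} {G : SimpleGraph V} (H : G.Subgraph) : ℕ :=
  Set.ncard {c : H.coe.ConnectedComponent | IsCycleComp H c ∧ c.supp.ncard % 4 = 2}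

/-- The number of components of `H` that are cycles. -/
def cycCount {V : Type*} {G : SimpleGraph V} (H : G.Subgraph) : ℕ :=
  Set.ncard {c : H.coe.ConnectedComponent | IsCycleComp H c}

/-- `R` is a union of connected components of `H`. -/
def IsComponentUnion {V : Type*} {G : SimpleGraph V} (R H : G.Subgraph) : Prop :=
  R ≤ H ∧ ∀ x y, H.Adj x y → x ∈ R.verts → R.Adj x y





namespace SimpleGraph.Subgraph
variable {V : Type*} {G : SimpleGraph V}

def liftWalk (H : G.Subgraph) :
    ∀ {u w : V} (p : G.Walk u w), (∀ e ∈ p.edges, e ∈ H.edgeSet) →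
      ∀ (hu : u ∈ H.verts) (hw : w ∈ H.verts), H.coe.Walk ⟨u, hu⟩ ⟨w, hw⟩
  | _, _, .nil, _, _, _ => .nil
  | a, _, .cons (v := b) h p, he, hu, hw =>
      have hadj : H.Adj a b := Subgraph.mem_edgeSet.1 (he s(a, b) (by simp))
      Walk.cons (v := ⟨b, hadj.snd_mem⟩)
        (by exact hadj) (H.liftWalk p (fun e he' => he e (by simp [he'])) hadj.snd_mem hw)

@[simp] theorem liftWalk_map (H : G.Subgraph) {u w : V} (p : G.Walk u w)
    (he : ∀ e ∈ p.edges, e ∈ H.edgeSet) (hu : u ∈ H.verts) (hw : w ∈ H.verts) :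
    (H.liftWalk p he hu hw).map H.hom = p := by
  induction p with
  | nil => simp [liftWalk]
  | cons h p ih =>
    simp only [liftWalk]
    exact congrArg (Walk.cons h) (ih _ _ hw)

theorem map_adj_iff' {W : Type*} {G' : SimpleGraph W} {f : G →g G'}
    (hf : Function.Injective f) {S : G.Subgraph} {x y : V} :
    (S.map f).Adj (f x) (f y) ↔ S.Adj x y := by
  constructor
  · rintro ⟨a, b, hab, ha, hb⟩
    rwa [hf ha, hf hb] at hab
  · intro h; exact ⟨x, y, h, rfl, rfl⟩

end SimpleGraph.Subgraph

section Cyc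
variable {V : Type*} {G : SimpleGraph V}


theorem end_mem_tail_closed {u : V} (p : G.Walk u u) (hl : p.darts ≠ []) :
    u ∈ p.support.tail := by
  rw [← p.map_snd_darts]
  have h1 : (p.darts.getLast hl).snd ∈ p.darts.map (·.snd) :=
    List.mem_map_of_mem (List.getLast_mem hl)
  rw [p.getLast_darts_eq_lastDart hl] at h1
  exact h1

theorem tail_length (p : G.Walk u u) : p.support.tail.length = p.length := by
  have h := p.length_support
  rw [p.support_eq_cons] at h
  rw [List.length_cons] at h; omega

theorem cycle_support_set_eq {u : V} {p : G.Walk u u} (hp : p.IsCycle) :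
    {x | x ∈ p.support} = {x | x ∈ p.support.tail} := by
  have hd : p.darts ≠ [] := by
    have h3 := hp.three_le_length
    intro h
    have := p.length_darts
    rw [h] at this; simp at this; omega
  ext x
  simp only [Set.mem_setOf_eq]
  rw [p.support_eq_cons, List.mem_cons]
  exact ⟨fun h => h.elim (fun h => h ▸ end_mem_tail_closed p hd) id, Or.inr⟩

theorem cycle_support_ncard {u : V} {p : G.Walk u u} (hp : p.IsCycle) :
    {x | x ∈ p.support}.ncard = p.length := by
  letI := Classical.decEq V
  rw [cycle_support_set_eq hp]
  have h1 : {x | x ∈ p.support.tail} = (p.support.tail.toFinset : Set V) := by ext x; simp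
  rw [h1, Set.ncard_coe_finset, List.toFinset_card_of_nodup hp.support_nodup, tail_length]

/-- In a 2-colorable graph, any closed walk has even length. -/
theorem closed_walk_even (hbip : G.Colorable 2) {u : V} (p : G.Walk u u) :
    Even p.length := by
  obtain ⟨C⟩ := hbip
  suffices h : ∀ {a b : V} (q : G.Walk a b), (C a = C b ↔ Even q.length) from (h p).1 rfl
  intro a b q
  induction q with
  | nil => simp
  | @cons x y z hadj q ih =>
    have hxy : C x ≠ C y := C.valid hadj
    simp only [Walk.length_cons, Nat.even_add_one, ← ih]
    have htri : ∀ (a b c : Fin 2), a ≠ b → b ≠ c → a = c := by decide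
    exact ⟨fun hxz hyz => hxy (hyz ▸ hxz), fun hyz => htri _ _ _ hxy hyz⟩

end Cyc

namespace DisjointSup
open SimpleGraph Subgraph
variable {V : Type*} {G : SimpleGraph V} {A B : G.Subgraph}

theorem adj_left (hd : Disjoint A.verts B.verts) {p q : V} (h : (A ⊔ B).Adj p q)
    (hp : p ∈ A.verts) : A.Adj p q := by
  rcases Subgraph.sup_adj.mp h with h | h
  · exact h
  · exact (Set.disjoint_left.mp hd hp h.fst_mem).elim

theorem adj_right (hd : Disjoint A.verts B.verts) {p q : V} (h : (A ⊔ B).Adj p q)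
    (hp : p ∈ B.verts) : B.Adj p q := by
  rcases Subgraph.sup_adj.mp h with h | h
  · exact (Set.disjoint_right.mp hd hp h.fst_mem).elim
  · exact h

theorem support_left (hd : Disjoint A.verts B.verts) {x y : ↥(A ⊔ B).verts}
    (p : (A ⊔ B).coe.Walk x y) (hx : (x : V) ∈ A.verts) :
    ∀ z ∈ p.support, (z : V) ∈ A.verts := by
  induction p with
  | nil => simpa using hx
  | @cons a b c h p ih =>
    have hb : (b : V) ∈ A.verts := (adj_left hd ((by exact h : (A ⊔ B).Adj ↑a ↑b)) hx).snd_mem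
    intro z hz
    rcases List.mem_cons.mp (by simpa using hz) with rfl | hz'
    · exact hx
    · exact ih hb z hz'

theorem end_left (hd : Disjoint A.verts B.verts) {x y : ↥(A ⊔ B).verts}
    (p : (A ⊔ B).coe.Walk x y) (hx : (x : V) ∈ A.verts) : (y : V) ∈ A.verts :=
  support_left hd p hx y p.end_mem_support

/-- Project a walk of `(A ⊔ B).coe` staying on the `A` side down to `A.coe`. -/
def projWalk (hd : Disjoint A.verts B.verts) {x y : ↥(A ⊔ B).verts}
    (p : (A ⊔ B).coe.Walk x y) (hx : (x : V) ∈ A.verts) (hy : (y : V) ∈ A.verts) :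
    A.coe.Walk ⟨x, hx⟩ ⟨y, hy⟩ :=
  A.liftWalk (p.map (A ⊔ B).hom) (by
    intro e he
    rw [Walk.edges_map, List.mem_map] at he
    obtain ⟨e', he', rfl⟩ := he
    induction e' using Sym2.inductionOn with
    | hf a b =>
      have hadj : (A ⊔ B).Adj a b := (by exact p.adj_of_mem_edges he' : (A ⊔ B).Adj ↑a ↑b)
      have ha : (a : V) ∈ A.verts :=
        support_left hd p hx a (p.fst_mem_support_of_mem_edges he')
      exact Subgraph.mem_edgeSet.2 (adj_left hd hadj ha)) hx hy

@[simp] theorem projWalk_map (hd : Disjoint A.verts B.verts) {x y : ↥(A ⊔ B).verts}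
    (p : (A ⊔ B).coe.Walk x y) (hx : (x : V) ∈ A.verts) (hy : (y : V) ∈ A.verts) :
    (projWalk hd p hx hy).map A.hom = p.map (A ⊔ B).hom :=
  liftWalk_map _ _ _ _ _



def ιAB (A B : G.Subgraph) : A.coe →g (A ⊔ B).coe := Subgraph.inclusion le_sup_left
def κAB (A B : G.Subgraph) : B.coe →g (A ⊔ B).coe := Subgraph.inclusion le_sup_right

@[simp] theorem val_ι (x : ↥A.verts) : ((ιAB A B x : ↥(A ⊔ B).verts) : V) = x := rfl
@[simp] theorem val_κ (x : ↥B.verts) : ((κAB A B x : ↥(A ⊔ B).verts) : V) = x := rfl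

theorem ι_inj : Function.Injective (ιAB A B) := by
  intro x y h
  have h2 := congrArg Subtype.val h
  exact Subtype.ext h2
theorem κ_inj : Function.Injective (κAB A B) := by
  intro x y h
  have h2 := congrArg Subtype.val h
  exact Subtype.ext h2

theorem support_right (hd : Disjoint A.verts B.verts) {x y : ↥(A ⊔ B).verts}
    (p : (A ⊔ B).coe.Walk x y) (hx : (x : V) ∈ B.verts) :
    ∀ z ∈ p.support, (z : V) ∈ B.verts := by
  induction p with
  | nil => simpa using hx
  | @cons a b c h p ih =>
    have hb : (b : V) ∈ B.verts :=
      (adj_right hd (by exact h : (A ⊔ B).Adj ↑a ↑b) hx).snd_mem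
    intro z hz
    rcases List.mem_cons.mp (by simpa using hz) with rfl | hz'
    · exact hx
    · exact ih hb z hz'

theorem end_right (hd : Disjoint A.verts B.verts) {x y : ↥(A ⊔ B).verts}
    (p : (A ⊔ B).coe.Walk x y) (hx : (x : V) ∈ B.verts) : (y : V) ∈ B.verts :=
  support_right hd p hx y p.end_mem_support

/-- Project a walk of `(A ⊔ B).coe` staying on the `B` side down to `B.coe`. -/
def projWalkR (hd : Disjoint A.verts B.verts) {x y : ↥(A ⊔ B).verts}
    (p : (A ⊔ B).coe.Walk x y) (hx : (x : V) ∈ B.verts) (hy : (y : V) ∈ B.verts) :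
    B.coe.Walk ⟨x, hx⟩ ⟨y, hy⟩ :=
  B.liftWalk (p.map (A ⊔ B).hom) (by
    intro e he
    rw [Walk.edges_map, List.mem_map] at he
    obtain ⟨e', he', rfl⟩ := he
    induction e' using Sym2.inductionOn with
    | hf a b =>
      have hadj : (A ⊔ B).Adj a b := (by exact p.adj_of_mem_edges he' : (A ⊔ B).Adj ↑a ↑b)
      have ha : (a : V) ∈ B.verts :=
        support_right hd p hx a (p.fst_mem_support_of_mem_edges he')
      exact Subgraph.mem_edgeSet.2 (adj_right hd hadj ha)) hx hy

@[simp] theorem projWalkR_map (hd : Disjoint A.verts B.verts) {x y : ↥(A ⊔ B).verts}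
    (p : (A ⊔ B).coe.Walk x y) (hx : (x : V) ∈ B.verts) (hy : (y : V) ∈ B.verts) :
    (projWalkR hd p hx hy).map B.hom = p.map (A ⊔ B).hom :=
  liftWalk_map _ _ _ _ _

theorem mem_supp_map_left (hd : Disjoint A.verts B.verts)
    (k : A.coe.ConnectedComponent) (x : ↥(A ⊔ B).verts) :
    x ∈ (k.map (ιAB A B)).supp ↔
      ∃ hx : (x : V) ∈ A.verts, (⟨(x : V), hx⟩ : ↥A.verts) ∈ k.supp := by
  induction k using ConnectedComponent.ind with
  | _ a =>
    rw [ConnectedComponent.map_mk]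
    constructor
    · intro hx
      rw [ConnectedComponent.mem_supp_iff, ConnectedComponent.eq] at hx
      obtain ⟨p⟩ := hx
      have hy : ((ιAB A B a : ↥(A ⊔ B).verts) : V) ∈ A.verts := a.2
      have hx' : (x : V) ∈ A.verts := end_left hd p.reverse hy
      refine ⟨hx', ?_⟩
      rw [ConnectedComponent.mem_supp_iff, ConnectedComponent.eq]
      exact ⟨(projWalk hd p hx' hy).copy rfl (Subtype.ext rfl)⟩
    · rintro ⟨hx, hk⟩
      rw [ConnectedComponent.mem_supp_iff, ConnectedComponent.eq] at hk ⊢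
      obtain ⟨p⟩ := hk
      exact ⟨(p.map (ιAB A B)).copy (Subtype.ext rfl) rfl⟩

theorem mem_supp_map_right (hd : Disjoint A.verts B.verts)
    (l : B.coe.ConnectedComponent) (x : ↥(A ⊔ B).verts) :
    x ∈ (l.map (κAB A B)).supp ↔
      ∃ hx : (x : V) ∈ B.verts, (⟨(x : V), hx⟩ : ↥B.verts) ∈ l.supp := by
  induction l using ConnectedComponent.ind with
  | _ a =>
    rw [ConnectedComponent.map_mk]
    constructor
    · intro hx
      rw [ConnectedComponent.mem_supp_iff, ConnectedComponent.eq] at hx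
      obtain ⟨p⟩ := hx
      have hy : ((κAB A B a : ↥(A ⊔ B).verts) : V) ∈ B.verts := a.2
      have hx' : (x : V) ∈ B.verts := end_right hd p.reverse hy
      refine ⟨hx', ?_⟩
      rw [ConnectedComponent.mem_supp_iff, ConnectedComponent.eq]
      exact ⟨(projWalkR hd p hx' hy).copy rfl (Subtype.ext rfl)⟩
    · rintro ⟨hx, hk⟩
      rw [ConnectedComponent.mem_supp_iff, ConnectedComponent.eq] at hk ⊢
      obtain ⟨p⟩ := hk
      exact ⟨(p.map (κAB A B)).copy (Subtype.ext rfl) rfl⟩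

theorem map_left_injective (hd : Disjoint A.verts B.verts) :
    Function.Injective (ConnectedComponent.map (ιAB A B)) := by
  intro k l h
  induction k using ConnectedComponent.ind with
  | _ a =>
  induction l using ConnectedComponent.ind with
  | _ b =>
    rw [ConnectedComponent.map_mk, ConnectedComponent.map_mk,
      ConnectedComponent.eq] at h
    obtain ⟨p⟩ := h
    rw [ConnectedComponent.eq]
    exact ⟨((projWalk hd p a.2 b.2).copy (Subtype.ext rfl) (Subtype.ext rfl))⟩

theorem comp_cases (m : (A ⊔ B).coe.ConnectedComponent) :
    (∃ k : A.coe.ConnectedComponent, m = k.map (ιAB A B)) ∨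
      (∃ l : B.coe.ConnectedComponent, m = l.map (κAB A B)) := by
  induction m using ConnectedComponent.ind with
  | _ x =>
    rcases (x.2 : (x : V) ∈ A.verts ∪ B.verts) with hx | hx
    · exact Or.inl ⟨SimpleGraph.connectedComponentMk _ ⟨(x : V), hx⟩, by
        rw [ConnectedComponent.map_mk]; congr 1⟩
    · exact Or.inr ⟨SimpleGraph.connectedComponentMk _ ⟨(x : V), hx⟩, by
        rw [ConnectedComponent.map_mk]; congr 1⟩


end DisjointSup

namespace DisjointSup
open SimpleGraph Subgraph
variable {V : Type*} {G : SimpleGraph V} {A B : G.Subgraph}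

theorem hom_inj (H : G.Subgraph) : Function.Injective H.hom := Subtype.val_injective

theorem support_map_set {W₁ W₂ : Type*} {G₁ : SimpleGraph W₁} {G₂ : SimpleGraph W₂}
    (f : G₁ →g G₂) {a b : W₁} (q : G₁.Walk a b) :
    {z | z ∈ (q.map f).support} = f '' {x | x ∈ q.support} := by
  ext z
  simp [Walk.support_map, List.mem_map, Set.mem_image]

theorem supp_val_inj {s t : Set ↥(A ⊔ B).verts}
    (h : Subtype.val '' s = Subtype.val '' t) : s = t :=
  Set.image_injective.mpr Subtype.val_injective h

theorem supp_val_inj' {s t : Set ↥A.verts}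
    (h : Subtype.val '' s = Subtype.val '' t) : s = t :=
  Set.image_injective.mpr Subtype.val_injective h

theorem supp_map_left_image (hd : Disjoint A.verts B.verts) (k : A.coe.ConnectedComponent) :
    Subtype.val '' (k.map (ιAB A B)).supp = Subtype.val '' k.supp := by
  ext z
  simp only [Set.mem_image]
  constructor
  · rintro ⟨x, hx, rfl⟩
    obtain ⟨h1, h2⟩ := (mem_supp_map_left hd k x).1 hx
    exact ⟨_, h2, rfl⟩
  · rintro ⟨y, hy, rfl⟩
    refine ⟨ιAB A B y, ?_, rfl⟩
    rw [mem_supp_map_left hd]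
    obtain ⟨yv, hyv⟩ := y
    exact ⟨hyv, hy⟩

theorem supp_map_left_ncard (hd : Disjoint A.verts B.verts) (k : A.coe.ConnectedComponent) :
    (k.map (ιAB A B)).supp.ncard = k.supp.ncard := by
  rw [← Set.ncard_image_of_injective (k.map (ιAB A B)).supp Subtype.val_injective,
    supp_map_left_image hd, Set.ncard_image_of_injective _ Subtype.val_injective]

theorem supp_map_left_eq_image (hd : Disjoint A.verts B.verts)
    (k : A.coe.ConnectedComponent) :
    (k.map (ιAB A B)).supp = (ιAB A B) '' k.supp := by
  apply supp_val_inj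
  rw [supp_map_left_image hd, ← Set.image_comp]
  rfl

theorem toSubgraph_adj_transfer {H : G.Subgraph} {a : ↥H.verts}
    (q : H.coe.Walk a a) {x y : ↥H.verts} :
    q.toSubgraph.Adj x y ↔ (q.map H.hom).toSubgraph.Adj (x : V) (y : V) := by
  rw [Walk.toSubgraph_map]
  exact (map_adj_iff' (hom_inj H)).symm

theorem edgeComp_map_left_iff (hd : Disjoint A.verts B.verts)
    (k : A.coe.ConnectedComponent) :
    IsEdgeComp (A ⊔ B) (k.map (ιAB A B)) ↔ IsEdgeComp A k := by
  constructor
  · rintro ⟨x, y, hadj, hsupp⟩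
    obtain ⟨hx1, hx2⟩ := (mem_supp_map_left hd k x).1 (by rw [hsupp]; exact Set.mem_insert _ _)
    have hadjA : A.Adj (x : V) (y : V) := adj_left hd (by exact hadj) hx1
    refine ⟨⟨(x : V), hx1⟩, ⟨(y : V), hadjA.snd_mem⟩, by exact hadjA, ?_⟩
    apply supp_val_inj'
    rw [← supp_map_left_image hd, hsupp]
    simp [Set.image_pair]
  · rintro ⟨x, y, hadj, hsupp⟩
    refine ⟨ιAB A B x, ιAB A B y, ?_, ?_⟩
    · exact Subgraph.sup_adj.mpr (Or.inl (by exact hadj))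
    · apply supp_val_inj
      rw [supp_map_left_image hd, hsupp]
      simp only [Set.image_pair]
      rfl

theorem cycleComp_map_left_iff (hd : Disjoint A.verts B.verts)
    (k : A.coe.ConnectedComponent) :
    IsCycleComp (A ⊔ B) (k.map (ιAB A B)) ↔ IsCycleComp A k := by
  constructor
  · rintro ⟨v0, w, hcyc, hsupp, hmax⟩
    have hv0 : (v0 : V) ∈ A.verts := by
      have h1 : v0 ∈ (k.map (ιAB A B)).supp := by
        rw [← hsupp]; exact w.start_mem_support
      exact ((mem_supp_map_left hd k v0).1 h1).1
    set w' := projWalk hd w hv0 hv0 with hw'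
    have hmapeq : w'.map A.hom = w.map (A ⊔ B).hom := projWalk_map hd w hv0 hv0
    have hcyc' : w'.IsCycle := by
      rw [← Walk.map_isCycle_iff_of_injective (hom_inj A), hmapeq]
      exact hcyc.map (hom_inj _)
    refine ⟨⟨(v0 : V), hv0⟩, w', hcyc', ?_, ?_⟩
    · apply supp_val_inj'
      have e1 : Subtype.val '' {x | x ∈ w'.support} = {z | z ∈ (w'.map A.hom).support} :=
        (support_map_set A.hom w').symm
      have e2 : Subtype.val '' {x | x ∈ w.support} = {z | z ∈ (w.map (A ⊔ B).hom).support} :=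
        (support_map_set (A ⊔ B).hom w).symm
      rw [e1, hmapeq]
      exact e2.symm.trans (by rw [hsupp, supp_map_left_image hd])
    · intro x y hadj hx
      have hxm : ιAB A B x ∈ (k.map (ιAB A B)).supp := by
        rw [mem_supp_map_left hd]
        obtain ⟨xv, hxv⟩ := x
        exact ⟨hxv, hx⟩
      have hadj2 : (A ⊔ B).coe.Adj (ιAB A B x) (ιAB A B y) :=
        Subgraph.sup_adj.mpr (Or.inl (by exact hadj))
      have h3 := hmax _ _ hadj2 hxm
      rw [toSubgraph_adj_transfer] at h3 ⊢
      rwa [hmapeq]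
  · rintro ⟨v0, w, hcyc, hsupp, hmax⟩
    refine ⟨ιAB A B v0, w.map (ιAB A B), hcyc.map ι_inj, ?_, ?_⟩
    · rw [support_map_set, hsupp, supp_map_left_eq_image hd]
    · intro x y hadj hx
      obtain ⟨hx1, hx2⟩ := (mem_supp_map_left hd k x).1 hx
      have hadjA : A.Adj (x : V) (y : V) := adj_left hd (by exact hadj) hx1
      have h3 := hmax ⟨(x : V), hx1⟩ ⟨(y : V), hadjA.snd_mem⟩ (by exact hadjA) hx2
      rw [Walk.toSubgraph_map]
      exact ⟨_, _, h3, Subtype.ext rfl, Subtype.ext rfl⟩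

end DisjointSup

namespace DisjointSup
open SimpleGraph Subgraph
variable {V : Type*} {G : SimpleGraph V} {A B : G.Subgraph} {v : V} {c : G.Walk v v}

theorem comp_right_all (hB : B = c.toSubgraph) :
    ∀ l l' : B.coe.ConnectedComponent, l = l' := by
  subst hB
  intro l l'
  induction l using ConnectedComponent.ind with
  | _ a =>
  induction l' using ConnectedComponent.ind with
  | _ b =>
    exact ConnectedComponent.sound ((c.toSubgraph_connected).coe a b)

theorem supp_map_right_image_all (hd : Disjoint A.verts B.verts) (hB : B = c.toSubgraph)
    (l : B.coe.ConnectedComponent) :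
    Subtype.val '' (l.map (κAB A B)).supp = B.verts := by
  ext z
  simp only [Set.mem_image]
  constructor
  · rintro ⟨x, hx, rfl⟩
    exact ((mem_supp_map_right hd l x).1 hx).1
  · intro hz
    refine ⟨⟨z, Set.mem_union_right _ hz⟩, ?_, rfl⟩
    rw [mem_supp_map_right hd]
    refine ⟨hz, ?_⟩
    rw [ConnectedComponent.mem_supp_iff]
    exact comp_right_all hB _ _

theorem supp_map_right_ncard (hd : Disjoint A.verts B.verts) (hB : B = c.toSubgraph)
    (hc : c.IsCycle) (l : B.coe.ConnectedComponent) :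
    (l.map (κAB A B)).supp.ncard = c.length := by
  subst hB
  rw [← Set.ncard_image_of_injective (l.map (κAB A c.toSubgraph)).supp Subtype.val_injective,
    supp_map_right_image_all hd rfl, c.verts_toSubgraph, cycle_support_ncard hc]

theorem cycleComp_right (hd : Disjoint A.verts B.verts) (hB : B = c.toSubgraph)
    (hc : c.IsCycle) (l : B.coe.ConnectedComponent) :
    IsCycleComp (A ⊔ B) (l.map (κAB A B)) := by
  subst hB
  have hvB : v ∈ c.toSubgraph.verts := c.start_mem_verts_toSubgraph
  have hvAB : v ∈ (A ⊔ c.toSubgraph).verts := Set.mem_union_right _ hvB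
  have hedge : ∀ e ∈ c.edges, e ∈ (A ⊔ c.toSubgraph).edgeSet := by
    intro e he
    exact Subgraph.edgeSet_mono le_sup_right ((c.mem_edges_toSubgraph).2 he)
  set w0 := (A ⊔ c.toSubgraph).liftWalk c hedge hvAB hvAB with hw0
  have hmap : w0.map (A ⊔ c.toSubgraph).hom = c := liftWalk_map _ _ _ _ _
  have hcyc0 : w0.IsCycle := by
    rw [← Walk.map_isCycle_iff_of_injective (hom_inj (A ⊔ c.toSubgraph)), hmap]
    exact hc
  refine ⟨⟨v, hvAB⟩, w0, hcyc0, ?_, ?_⟩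
  · apply supp_val_inj
    have e1 : Subtype.val '' {x | x ∈ w0.support} =
        {z | z ∈ (w0.map (A ⊔ c.toSubgraph).hom).support} :=
      (support_map_set (A ⊔ c.toSubgraph).hom w0).symm
    rw [e1, hmap, supp_map_right_image_all hd rfl, c.verts_toSubgraph]
    rfl
  · intro x y hadj hx
    have hxB : (x : V) ∈ c.toSubgraph.verts := by
      have : (x : V) ∈ Subtype.val '' (l.map (κAB A c.toSubgraph)).supp := ⟨x, hx, rfl⟩
      rwa [supp_map_right_image_all hd rfl] at this
    have hadjB : c.toSubgraph.Adj (x : V) (y : V) := adj_right hd (by exact hadj) hxB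
    rw [toSubgraph_adj_transfer, hmap]
    exact hadjB

theorem isSachs_sup (hd : Disjoint A.verts B.verts) (hB : B = c.toSubgraph)
    (hc : c.IsCycle) : IsSachs (A ⊔ B) ↔ IsSachs A := by
  constructor
  · intro h k
    rcases h (k.map (ιAB A B)) with he | hcy
    · exact Or.inl ((edgeComp_map_left_iff hd k).1 he)
    · exact Or.inr ((cycleComp_map_left_iff hd k).1 hcy)
  · intro h m
    rcases comp_cases m with ⟨k, rfl⟩ | ⟨l, rfl⟩
    · rcases h k with he | hcy
      · exact Or.inl ((edgeComp_map_left_iff hd k).2 he)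
      · exact Or.inr ((cycleComp_map_left_iff hd k).2 hcy)
    · exact Or.inr (cycleComp_right hd hB hc l)

theorem count_eq (hd : Disjoint A.verts B.verts) (hB : B = c.toSubgraph)
    (hc : c.IsCycle) (h4 : 4 ∣ c.length)
    (hW2 : ∀ k : A.coe.ConnectedComponent, IsCycleComp A k → k.supp.ncard % 4 = 2) :
    cycCount A = tCount (A ⊔ B) := by
  unfold cycCount tCount
  have himg : {m : (A ⊔ B).coe.ConnectedComponent |
      IsCycleComp (A ⊔ B) m ∧ m.supp.ncard % 4 = 2} =
      ConnectedComponent.map (ιAB A B) '' {k | IsCycleComp A k} := by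
    ext m
    constructor
    · rintro ⟨hcy, h2⟩
      rcases comp_cases m with ⟨k, rfl⟩ | ⟨l, rfl⟩
      · exact ⟨k, (cycleComp_map_left_iff hd k).1 hcy, rfl⟩
      · exfalso
        rw [supp_map_right_ncard hd hB hc] at h2
        omega
    · rintro ⟨k, hk, rfl⟩
      refine ⟨(cycleComp_map_left_iff hd k).2 hk, ?_⟩
      rw [supp_map_left_ncard hd]
      exact hW2 k hk
  rw [himg, Set.ncard_image_of_injective _ (map_left_injective hd)]

end DisjointSup

section Final
open SimpleGraph Subgraph DisjointSup
variable {V : Type*} {G : SimpleGraph V}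

theorem decomp {R H : G.Subgraph} (hcu : IsComponentUnion R H) :
    H = (H.deleteVerts R.verts) ⊔ R := by
  have hRv : R.verts ⊆ H.verts := hcu.1.1
  refine Subgraph.ext ?_ ?_
  · simp only [Subgraph.verts_sup, Subgraph.deleteVerts_verts]
    rw [Set.diff_union_self, Set.union_eq_self_of_subset_right hRv]
  · funext x y
    apply propext
    rw [Subgraph.sup_adj]
    constructor
    · intro h
      by_cases hx : x ∈ R.verts
      · exact Or.inr (hcu.2 x y h hx)
      by_cases hy : y ∈ R.verts
      · exact Or.inr ((hcu.2 y x h.symm hy).symm)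
      · exact Or.inl (Subgraph.deleteVerts_adj.2 ⟨h.fst_mem, hx, h.snd_mem, hy, h⟩)
    · rintro (h | h)
      · exact (Subgraph.deleteVerts_adj.1 h).2.2.2.2
      · exact hcu.1.2 h

theorem delete_sup {W R : G.Subgraph} (hd : Disjoint W.verts R.verts) :
    (W ⊔ R).deleteVerts R.verts = W := by
  refine Subgraph.ext ?_ ?_
  · simp only [Subgraph.deleteVerts_verts, Subgraph.verts_sup]
    exact Set.union_diff_cancel_right (by rw [Set.disjoint_iff_inter_eq_empty.1 hd])
  · funext x y
    apply propext
    constructor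
    · intro h
      obtain ⟨hxv, hx, hyv, hy, hadj⟩ := Subgraph.deleteVerts_adj.1 h
      rcases Subgraph.sup_adj.1 hadj with h' | h'
      · exact h'
      · exact (hx h'.fst_mem).elim
    · intro h
      exact Subgraph.deleteVerts_adj.2 ⟨Set.mem_union_left _ h.fst_mem,
        Set.disjoint_left.mp hd h.fst_mem, Set.mem_union_left _ h.snd_mem,
        Set.disjoint_left.mp hd h.snd_mem, Subgraph.sup_adj.2 (Or.inl h)⟩

end Final


/-- Let `G` be a `4k`-intercyclic bipartite graph, `R = c.toSubgraph` a cycle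
of `G` of length divisible by 4, and `i` an even integer with `i ≥ |V(R)|`. Then deleting the
vertices of `R` is a bijection from the Sachs subgraphs of `G` on `i` vertices containing `R`
as a union of components onto the Sachs subgraphs on `i - |V(R)|` vertices avoiding `V(R)`
(i.e. the Sachs subgraphs of `G∖R`); moreover it sends the number of cycle components of
length ≡ 2 mod 4 to the total number of cycle components. -/
theorem stmt_7 {V : Type*} [Fintype V] (G : SimpleGraph V) (hbip : G.Colorable 2)
    (hic : Intercyclic4k G) (v : V) (c : G.Walk v v) (hc : c.IsCycle) (h4 : 4 ∣ c.length)
    (i : ℕ) (hi : Even i) (hge : (c.toSubgraph.verts).ncard ≤ i) :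
    Set.BijOn (fun H : G.Subgraph => H.deleteVerts c.toSubgraph.verts)
        {H : G.Subgraph | IsSachs H ∧ H.verts.ncard = i ∧ IsComponentUnion c.toSubgraph H}
        {W : G.Subgraph | IsSachs W ∧ W.verts.ncard = i - c.toSubgraph.verts.ncard ∧
          Disjoint W.verts c.toSubgraph.verts}
    ∧ ∀ H : G.Subgraph, IsSachs H → H.verts.ncard = i → IsComponentUnion c.toSubgraph H →
        cycCount (H.deleteVerts c.toSubgraph.verts) = tCount H := by
  classical
  have hncardR : c.toSubgraph.verts.ncard = c.length := by
    rw [c.verts_toSubgraph]; exact cycle_support_ncard hc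
  have hW2 : ∀ A : G.Subgraph, Disjoint A.verts c.toSubgraph.verts →
      ∀ k : A.coe.ConnectedComponent, IsCycleComp A k → k.supp.ncard % 4 = 2 := by
    intro A hd k hk
    obtain ⟨v0, w, hw, hsupp, -⟩ := hk
    have hn : k.supp.ncard = w.length := by
      rw [← hsupp]; exact cycle_support_ncard hw
    have hqcyc : (w.map A.hom).IsCycle := hw.map (DisjointSup.hom_inj A)
    have hqlen : (w.map A.hom).length = w.length := Walk.length_map _ w
    have heven : Even (w.map A.hom).length := closed_walk_even hbip _
    have hnot4 : ¬ (4 ∣ (w.map A.hom).length) := by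
      intro h44
      apply hic
      refine ⟨v, _, c, w.map A.hom, hc, hqcyc, h4, h44, ?_⟩
      intro x hx hx2
      have hxR : x ∈ c.toSubgraph.verts := (c.mem_verts_toSubgraph).2 hx
      have hxA : x ∈ A.verts := by
        have h5 : x ∈ {z | z ∈ (w.map A.hom).support} := hx2
        rw [DisjointSup.support_map_set] at h5
        obtain ⟨z, -, rfl⟩ := h5
        exact z.2
      exact Set.disjoint_left.mp hd hxA hxR
    rw [Nat.even_iff] at heven
    rw [Nat.dvd_iff_mod_eq_zero] at hnot4
    omega
  constructor
  · refine ⟨?_, ?_, ?_⟩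
    · rintro H ⟨hS, hcard, hcu⟩
      have hdec := decomp hcu
      have hd : Disjoint (H.deleteVerts c.toSubgraph.verts).verts c.toSubgraph.verts := by
        simp only [Subgraph.deleteVerts_verts]
        exact Set.disjoint_sdiff_left
      refine ⟨?_, ?_, hd⟩
      · exact (DisjointSup.isSachs_sup hd rfl hc).1 (hdec ▸ hS)
      · simp only [Subgraph.deleteVerts_verts]
        rw [Set.ncard_diff hcu.1.1 (Set.toFinite _), hcard]
    · rintro H1 ⟨-, -, hcu1⟩ H2 ⟨-, -, hcu2⟩ he
      simp only at he
      calc H1 = (H1.deleteVerts c.toSubgraph.verts) ⊔ c.toSubgraph := decomp hcu1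
        _ = (H2.deleteVerts c.toSubgraph.verts) ⊔ c.toSubgraph := by rw [he]
        _ = H2 := (decomp hcu2).symm
    · rintro W ⟨hS, hcard, hdisj⟩
      refine ⟨W ⊔ c.toSubgraph, ⟨?_, ?_, ?_⟩, ?_⟩
      · exact (DisjointSup.isSachs_sup hdisj rfl hc).2 hS
      · rw [Subgraph.verts_sup,
          Set.ncard_union_eq hdisj (Set.toFinite _) (Set.toFinite _), hcard]
        omega
      · exact ⟨le_sup_right, fun x y hxy hx => DisjointSup.adj_right hdisj hxy hx⟩
      · exact delete_sup hdisj
  · intro H hS hcard hcu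
    have hdec := decomp hcu
    have hd : Disjoint (H.deleteVerts c.toSubgraph.verts).verts c.toSubgraph.verts := by
      simp only [Subgraph.deleteVerts_verts]
      exact Set.disjoint_sdiff_left
    calc cycCount (H.deleteVerts c.toSubgraph.verts)
        = tCount ((H.deleteVerts c.toSubgraph.verts) ⊔ c.toSubgraph) :=
          DisjointSup.count_eq hd rfl hc h4 (hW2 _ hd)
      _ = tCount H := by rw [← hdec]


end
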